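/- Let 1 < q ≤ 2, p = q/(q−1), A_q > 1, B > 0, and let {a_k}_{k≥0} be a sequence of nonnegative numbers with a_0 ≤ B and, for each k ≥ 1, a_k^p ≤ a_{k-1}^p (1 − t_k^p a_{k-1}^p / (A_q B^p)) where t_k ∈ [0,1]. Then for every m ≥ 1, a_m^p ≤ A_q B^p (1 + Σ_{k=1}^m t_k^p)^{−1}. -/

import Mathlib

/-- the recursive sequence estimate (cf. DeVore–Temlyakov Lemma 3.4):
if a₀ ≤ B and aₖᵖ ≤ aₖ₋₁ᵖ (1 - tₖᵖ aₖ₋₁ᵖ / (A_q Bᵖ)), then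
aₘᵖ ≤ A_q Bᵖ (1 + ∑_{k=1}^m tₖᵖ)⁻¹. -/
theorem stmt_9 (q p A_q B : ℝ) (hq : 1 < q) (hq2 : q ≤ 2) (hp : p = q / (q - 1))
    (hAq : 1 < A_q) (hB : 0 < B)
    (a : ℕ → ℝ) (ha : ∀ k, 0 ≤ a k) (ha0 : a 0 ≤ B)
    (t : ℕ → ℝ) (ht : ∀ k, t k ∈ Set.Icc (0:ℝ) 1)
    (hrec : ∀ k : ℕ, 1 ≤ k →
      a k ^ p ≤ a (k - 1) ^ p * (1 - t k ^ p * a (k - 1) ^ p / (A_q * B ^ p))) :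
    ∀ m : ℕ, 1 ≤ m →
      a m ^ p ≤ A_q * B ^ p * (1 + ∑ k ∈ Finset.Icc 1 m, t k ^ p)⁻¹ := by
  have hp0 : 0 < p := by
    rw [hp]; exact div_pos (by linarith) (by linarith)
  have hBp : 0 < B ^ p := Real.rpow_pos_of_pos hB p
  set C : ℝ := A_q * B ^ p with hC
  have hC0 : 0 < C := by positivity
  have hak : ∀ k, 0 ≤ a k ^ p := fun k => Real.rpow_nonneg (ha k) p
  have htk0 : ∀ k, 0 ≤ t k ^ p := fun k => Real.rpow_nonneg (ht k).1 p
  have htk1 : ∀ k, t k ^ p ≤ 1 := fun k =>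
    Real.rpow_le_one (ht k).1 (ht k).2 hp0.le
  -- monotone bound a m ^ p ≤ B ^ p
  have hmono : ∀ m, a m ^ p ≤ B ^ p := by
    intro m
    induction m with
    | zero => exact Real.rpow_le_rpow (ha 0) ha0 hp0.le
    | succ n ih =>
      have h1 := hrec (n + 1) (Nat.le_add_left 1 n)
      simp only [Nat.add_sub_cancel] at h1
      have h2 : a n ^ p * (1 - t (n + 1) ^ p * a n ^ p / C) ≤ a n ^ p * 1 := by
        apply mul_le_mul_of_nonneg_left _ (hak n)
        have : 0 ≤ t (n + 1) ^ p * a n ^ p / C :=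
          div_nonneg (mul_nonneg (htk0 _) (hak n)) hC0.le
        linarith
      calc a (n + 1) ^ p ≤ a n ^ p * 1 := le_trans h1 h2
        _ ≤ B ^ p := by rw [mul_one]; exact ih
  -- main induction
  have main : ∀ m : ℕ, a m ^ p * (1 + ∑ k ∈ Finset.Icc 1 m, t k ^ p) ≤ C := by
    intro m
    induction m with
    | zero =>
      simp only [Finset.Icc_self, Finset.Icc_eq_empty_of_lt (by norm_num : (1:ℕ) > 0)]
      simp only [show Finset.Icc 1 0 = (∅ : Finset ℕ) from rfl, Finset.sum_empty, add_zero,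
        mul_one]
      calc a 0 ^ p ≤ B ^ p := hmono 0
        _ ≤ C := by nlinarith
    | succ n ih =>
      have hsum : ∑ k ∈ Finset.Icc 1 (n + 1), t k ^ p
          = (∑ k ∈ Finset.Icc 1 n, t k ^ p) + t (n + 1) ^ p :=
        Finset.sum_Icc_succ_top (Nat.le_add_left 1 n) _
      rw [hsum]
      set S : ℝ := ∑ k ∈ Finset.Icc 1 n, t k ^ p with hS
      have hS0 : 0 ≤ S := Finset.sum_nonneg fun k _ => htk0 k
      set c : ℝ := t (n + 1) ^ p with hc
      set A : ℝ := a n ^ p with hA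
      have h1 := hrec (n + 1) (Nat.le_add_left 1 n)
      simp only [Nat.add_sub_cancel] at h1
      have hA0 : 0 ≤ A := hak n
      have hcA : c * A ≤ C := by
        have : c * A ≤ 1 * A := mul_le_mul_of_nonneg_right (htk1 (n + 1)) hA0
        have hAB : A ≤ B ^ p := hmono n
        nlinarith
      have hkey : A * (1 - c * A / C) * (1 + S + c) ≤ C := by
        have hexp : A * (1 - c * A / C) = (A * C - c * A ^ 2) / C := by
          field_simp
        rw [hexp, div_mul_eq_mul_div, div_le_iff₀ hC0]
        nlinarith [mul_nonneg (sub_nonneg.2 ih) (sub_nonneg.2 hcA), sq_nonneg (c * A),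
          mul_nonneg (mul_nonneg (htk0 (n + 1)) (htk0 (n + 1))) (mul_nonneg hA0 hA0)]
      have hfac : 0 ≤ 1 + S + c := by nlinarith [htk0 (n + 1)]
      calc a (n + 1) ^ p * (1 + (S + c))
          ≤ A * (1 - c * A / C) * (1 + S + c) := by
            have := mul_le_mul_of_nonneg_right h1 hfac
            linarith [this]
        _ ≤ C := hkey
  intro m _
  have hpos : 0 < 1 + ∑ k ∈ Finset.Icc 1 m, t k ^ p := by
    have : 0 ≤ ∑ k ∈ Finset.Icc 1 m, t k ^ p := Finset.sum_nonneg fun k _ => htk0 k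
    linarith
  rw [← div_eq_mul_inv, le_div_iff₀ hpos]
  exact main m
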